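/- Let M be a cancellative Noetherian monoid and δ a balanced element. Then the set of atoms dividing δ is permuted by conjugation by δ: for every atom s left-dividing δ there is an atom t left-dividing δ with s·δ = δ·t. -/
import Mathlib


namespace Garside

variable {M : Type*}

/-- left-divisibility -/
def LDvd [Monoid M] (a b : M) : Prop := ∃ c, b = a * c

/-- right-divisibility -/
def RDvd [Monoid M] (a b : M) : Prop := ∃ c, b = c * a

/-- Noetherian: lengths of factorizations into non-identity factors are bounded. -/
def NoetherianM (M : Type*) [Monoid M] : Prop :=
  ∀ g : M, ∃ N : ℕ, ∀ l : List M, l.prod = g → (∀ x ∈ l, x ≠ 1) → l.length ≤ N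

/-- balanced element: left divisors = right divisors -/
def Balanced [Monoid M] (δ : M) : Prop := ∀ g : M, LDvd g δ ↔ RDvd g δ

/-- the set of (left-)divisors of a (balanced) element -/
def D [Monoid M] (δ : M) : Set M := {g | LDvd g δ}

/-- atom of a monoid -/
def IsAtomM [Monoid M] (h : M) : Prop := h ≠ 1 ∧ ∀ g k : M, h = g * k → g = 1 ∨ k = 1

/-- support of a balanced element: atoms dividing it -/
def suppM [Monoid M] (δ : M) : Set M := {s | IsAtomM s ∧ LDvd s δ}

/-- A Garside monoid structure on a cancellative monoid. -/
structure GarsideMonoid (M : Type*) [CancelMonoid M] where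
  noeth : NoetherianM M
  wedgeL : M → M → M
  wedgeL_dvd_left : ∀ a b, LDvd (wedgeL a b) a
  wedgeL_dvd_right : ∀ a b, LDvd (wedgeL a b) b
  le_wedgeL : ∀ a b c, LDvd c a → LDvd c b → LDvd c (wedgeL a b)
  veeL : M → M → M
  dvd_veeL_left : ∀ a b, LDvd a (veeL a b)
  dvd_veeL_right : ∀ a b, LDvd b (veeL a b)
  veeL_le : ∀ a b c, LDvd a c → LDvd b c → LDvd (veeL a b) c
  wedgeR : M → M → M
  wedgeR_dvd_left : ∀ a b, RDvd (wedgeR a b) a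
  wedgeR_dvd_right : ∀ a b, RDvd (wedgeR a b) b
  le_wedgeR : ∀ a b c, RDvd c a → RDvd c b → RDvd c (wedgeR a b)
  veeR : M → M → M
  dvd_veeR_left : ∀ a b, RDvd a (veeR a b)
  dvd_veeR_right : ∀ a b, RDvd b (veeR a b)
  veeR_le : ∀ a b c, RDvd a c → RDvd b c → RDvd (veeR a b) c
  Δ : M
  balanced : Balanced Δ
  finD : (D Δ).Finite
  gen : Submonoid.closure (D Δ) = ⊤

variable [CancelMonoid M]

/-- head function (left) -/
def GarsideMonoid.αL (G : GarsideMonoid M) (w : M) : M := G.wedgeL w G.Δ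

/-- head function (right) -/
def GarsideMonoid.αR (G : GarsideMonoid M) (w : M) : M := G.wedgeR w G.Δ

/-- Garside submonoid: a sublattice submonoid closed under the head maps. -/
def IsGarsideSubmonoid (G : GarsideMonoid M) (H : Submonoid M) : Prop :=
  (∀ a ∈ H, ∀ b ∈ H,
      G.wedgeL a b ∈ H ∧ G.veeL a b ∈ H ∧ G.wedgeR a b ∈ H ∧ G.veeR a b ∈ H) ∧
  (∀ h ∈ H, G.αL h ∈ H ∧ G.αR h ∈ H)

/-- least upper bound of a set for left-divisibility -/
def IsLubL (S : Set M) (δ : M) : Prop :=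
  (∀ x ∈ S, LDvd x δ) ∧ ∀ c, (∀ x ∈ S, LDvd x c) → LDvd δ c

/-- least upper bound of a set for right-divisibility -/
def IsLubR (S : Set M) (δ : M) : Prop :=
  (∀ x ∈ S, RDvd x δ) ∧ ∀ c, (∀ x ∈ S, RDvd x c) → RDvd δ c

theorem atoms_of_support_permuted_by_conjugation {M : Type*} [CancelMonoid M]
    (hN : NoetherianM M) (δ : M) (hδ : Balanced δ)
    (s : M) (hs : IsAtomM s) (hsδ : LDvd s δ) :
    ∃ t : M, IsAtomM t ∧ LDvd t δ ∧ s * δ = δ * t := by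
  -- conjugation lemma: δ * x = x' * δ for x dividing δ
  have conj : ∀ x : M, LDvd x δ → ∃ x', δ * x = x' * δ ∧ (x' = 1 → x = 1) := by
    intro x hx
    obtain ⟨y, hy⟩ := (hδ x).mp hx
    obtain ⟨x', hx'⟩ := (hδ y).mp ⟨x, hy⟩
    refine ⟨x', ?_, ?_⟩
    · calc δ * x = x' * y * x := by rw [← hx']
        _ = x' * δ := by rw [mul_assoc, ← hy]
    · intro h1
      have : δ * x = δ * 1 := by
        rw [mul_one]
        calc δ * x = x' * δ := by
              calc δ * x = x' * y * x := by rw [← hx']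
                _ = x' * δ := by rw [mul_assoc, ← hy]
          _ = δ := by rw [h1, one_mul]
      exact mul_left_cancel this
  obtain ⟨u, hu⟩ := hsδ
  obtain ⟨t, ht⟩ := (hδ u).mpr ⟨s, hu⟩
  have htδ : LDvd t δ := (hδ t).mpr ⟨u, ht⟩
  have hst : s * δ = δ * t := by
    conv_lhs => rw [ht]
    rw [← mul_assoc, ← hu]
  refine ⟨t, ⟨?_, ?_⟩, htδ, hst⟩
  · intro h1
    rw [h1, mul_one] at ht
    rw [← ht] at hu
    have : s * δ = 1 * δ := by rw [one_mul, ← hu]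
    exact hs.1 (mul_right_cancel this)
  · intro g k hgk
    have hgδ : LDvd g δ := by
      obtain ⟨v, hv⟩ := htδ
      exact ⟨k * v, by rw [hv, hgk, mul_assoc]⟩
    have hkδ : LDvd k δ := (hδ k).mpr ⟨u * g, by rw [ht, hgk, mul_assoc]⟩
    obtain ⟨g', hg', hg1⟩ := conj g hgδ
    obtain ⟨k', hk', hk1⟩ := conj k hkδ
    have : s * δ = (g' * k') * δ := by
      calc s * δ = δ * (g * k) := by rw [hst, hgk]
        _ = (δ * g) * k := by rw [mul_assoc]
        _ = g' * (δ * k) := by rw [hg', mul_assoc]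
        _ = (g' * k') * δ := by rw [hk', mul_assoc]
    have hsgk : s = g' * k' := mul_right_cancel this
    rcases hs.2 g' k' hsgk with h | h
    · exact Or.inl (hg1 h)
    · exact Or.inr (hk1 h)
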